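/- Let θ_2 = log 3/log 2, ψ and M as above, and d(u) = M(u)/u^{θ_2}. Then for every positive integer u, lim_{k→∞} d(2^k u) = d(u) − (3ψ(u−1) + ψ(u−2))/(5 u^{θ_2}). -/

import Mathlib

open Filter

/-- `ψ(q)`: number of `(m,n)` with `m ≥ n ≥ 0`, `C(m,n)` odd and `m + 2n = q`
(extended by `0` to negative `q`). -/
noncomputable def psi (q : ℤ) : ℕ :=
  {mn : ℕ × ℕ | mn.2 ≤ mn.1 ∧ (mn.1 : ℤ) + 2 * (mn.2 : ℤ) = q ∧
    ¬ 2 ∣ Nat.choose mn.1 mn.2}.ncard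

/-- `M(u) = Σ_{0 ≤ q < u} ψ(q)`. -/
noncomputable def Mfun (u : ℕ) : ℕ := ∑ q ∈ Finset.range u, psi (q : ℤ)

/-- `θ₂ = log 3 / log 2`. -/
noncomputable def theta2 : ℝ := Real.log 3 / Real.log 2

/-- `d(u) = M(u)/u^{θ₂}`. -/
noncomputable def dfun (u : ℕ) : ℝ := (Mfun u : ℝ) / (u : ℝ) ^ theta2

/-! ### Auxiliary lemmas -/

/-- The solution set defining `psi`. -/
def psiSet (q : ℤ) : Set (ℕ × ℕ) :=
  {mn : ℕ × ℕ | mn.2 ≤ mn.1 ∧ (mn.1 : ℤ) + 2 * (mn.2 : ℤ) = q ∧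
    ¬ 2 ∣ Nat.choose mn.1 mn.2}

lemma psi_eq_ncard (q : ℤ) : psi q = (psiSet q).ncard := rfl

lemma psiSet_finite (q : ℤ) : (psiSet q).Finite := by
  apply Set.Finite.subset (Set.finite_Icc ((0, 0) : ℕ × ℕ) (q.toNat, q.toNat))
  rintro ⟨m, n⟩ ⟨h1, h2, h3⟩
  simp only [Set.mem_Icc, Prod.mk_le_mk]
  omega

/-- Lucas's theorem mod 2, as an oddness decomposition. -/
lemma choose_odd_decomp (n k : ℕ) :
    (¬ 2 ∣ Nat.choose n k) ↔
      (¬ 2 ∣ Nat.choose (n % 2) (k % 2)) ∧ ¬ 2 ∣ Nat.choose (n / 2) (k / 2) := by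
  have : Fact (Nat.Prime 2) := ⟨Nat.prime_two⟩
  have h := @Choose.choose_modEq_choose_mod_mul_choose_div_nat n k 2 this
  rw [Nat.ModEq] at h
  have h2 : 2 ∣ Nat.choose n k ↔
      2 ∣ (Nat.choose (n % 2) (k % 2) * Nat.choose (n / 2) (k / 2)) := by
    rw [Nat.dvd_iff_mod_eq_zero, Nat.dvd_iff_mod_eq_zero, h]
  rw [h2, Nat.prime_two.dvd_mul, not_or]

lemma odd_choose_ee (m n : ℕ) :
    (¬ 2 ∣ Nat.choose (2 * m) (2 * n)) ↔ ¬ 2 ∣ Nat.choose m n := by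
  rw [choose_odd_decomp]
  simp [Nat.mul_mod_right, Nat.mul_div_cancel_left]

lemma odd_choose_eo (m n : ℕ) : (2 : ℕ) ∣ Nat.choose (2 * m) (2 * n + 1) := by
  by_contra h
  rw [choose_odd_decomp] at h
  have h1 := h.1
  rw [Nat.mul_mod_right] at h1
  have : (2 * n + 1) % 2 = 1 := by omega
  rw [this] at h1
  simp [Nat.choose] at h1

lemma odd_choose_oe (m n : ℕ) :
    (¬ 2 ∣ Nat.choose (2 * m + 1) (2 * n)) ↔ ¬ 2 ∣ Nat.choose m n := by
  rw [choose_odd_decomp]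
  have h1 : (2 * m + 1) % 2 = 1 := by omega
  have h2 : (2 * m + 1) / 2 = m := by omega
  have h3 : (2 * n) % 2 = 0 := by omega
  have h4 : (2 * n) / 2 = n := by omega
  rw [h1, h2, h3, h4]
  simp [Nat.choose]

lemma odd_choose_oo (m n : ℕ) :
    (¬ 2 ∣ Nat.choose (2 * m + 1) (2 * n + 1)) ↔ ¬ 2 ∣ Nat.choose m n := by
  rw [choose_odd_decomp]
  have h1 : (2 * m + 1) % 2 = 1 := by omega
  have h2 : (2 * m + 1) / 2 = m := by omega
  have h3 : (2 * n + 1) % 2 = 1 := by omega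
  have h4 : (2 * n + 1) / 2 = n := by omega
  rw [h1, h2, h3, h4]
  simp [Nat.choose]

lemma psi_neg {q : ℤ} (hq : q < 0) : psi q = 0 := by
  have : psiSet q = ∅ := by
    ext ⟨m, n⟩
    simp only [psiSet, Set.mem_setOf_eq, Set.mem_empty_iff_false, iff_false, not_and]
    intro _ h2
    omega
  rw [psi_eq_ncard, this, Set.ncard_empty]

lemma psi_even (q : ℤ) : psi (2 * q) = psi q := by
  rcases lt_or_ge q 0 with hq | hq
  · rw [psi_neg hq, psi_neg (by omega)]
  have himg : psiSet (2 * q) = (fun p : ℕ × ℕ => (2 * p.1, 2 * p.2)) '' psiSet q := by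
    ext ⟨m, n⟩
    constructor
    · rintro ⟨h1, h2, h3⟩
      obtain ⟨m', hm⟩ : ∃ m', m = 2 * m' := ⟨m / 2, by omega⟩
      obtain ⟨n', hn⟩ : ∃ n', n = 2 * n' := by
        refine ⟨n / 2, ?_⟩
        by_contra hodd
        have hn1 : n = 2 * (n / 2) + 1 := by omega
        rw [hm, hn1] at h3
        exact h3 (odd_choose_eo m' (n / 2))
      subst hm; subst hn
      exact ⟨(m', n'), ⟨by omega, by push_cast at h2 ⊢; omega,
        (odd_choose_ee m' n').mp h3⟩, rfl⟩
    · rintro ⟨⟨m', n'⟩, ⟨h1, h2, h3⟩, heq⟩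
      obtain ⟨hm, hn⟩ : 2 * m' = m ∧ 2 * n' = n := by
        simpa [Prod.ext_iff] using heq
      subst hm; subst hn
      exact ⟨by omega, by push_cast; omega, (odd_choose_ee m' n').mpr h3⟩
  have hinj : Function.Injective (fun p : ℕ × ℕ => (2 * p.1, 2 * p.2)) := by
    rintro ⟨a, b⟩ ⟨c, d⟩ h
    simp only [Prod.ext_iff] at h ⊢
    omega
  rw [psi_eq_ncard, psi_eq_ncard, himg, Set.ncard_image_of_injective _ hinj]

lemma psi_odd (q : ℤ) : psi (2 * q + 1) = psi q + psi (q - 1) := by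
  rcases lt_or_ge q 0 with hq | hq
  · rw [psi_neg hq, psi_neg (by omega), psi_neg (by omega)]
  have himg : psiSet (2 * q + 1) =
      ((fun p : ℕ × ℕ => (2 * p.1 + 1, 2 * p.2)) '' psiSet q) ∪
      ((fun p : ℕ × ℕ => (2 * p.1 + 1, 2 * p.2 + 1)) '' psiSet (q - 1)) := by
    ext ⟨m, n⟩
    constructor
    · rintro ⟨h1, h2, h3⟩
      obtain ⟨m', hm⟩ : ∃ m', m = 2 * m' + 1 := ⟨m / 2, by omega⟩
      by_cases hn2 : n % 2 = 0
      · left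
        obtain ⟨n', hn⟩ : ∃ n', n = 2 * n' := ⟨n / 2, by omega⟩
        subst hm; subst hn
        exact ⟨(m', n'), ⟨by omega, by push_cast at h2 ⊢; omega,
          (odd_choose_oe m' n').mp h3⟩, rfl⟩
      · right
        obtain ⟨n', hn⟩ : ∃ n', n = 2 * n' + 1 := ⟨n / 2, by omega⟩
        subst hm; subst hn
        exact ⟨(m', n'), ⟨by omega, by push_cast at h2 ⊢; omega,
          (odd_choose_oo m' n').mp h3⟩, rfl⟩
    · rintro (⟨⟨m', n'⟩, ⟨h1, h2, h3⟩, heq⟩ | ⟨⟨m', n'⟩, ⟨h1, h2, h3⟩, heq⟩)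
      · obtain ⟨hm, hn⟩ : 2 * m' + 1 = m ∧ 2 * n' = n := by
          simpa [Prod.ext_iff] using heq
        subst hm; subst hn
        exact ⟨by omega, by push_cast; omega, (odd_choose_oe m' n').mpr h3⟩
      · obtain ⟨hm, hn⟩ : 2 * m' + 1 = m ∧ 2 * n' + 1 = n := by
          simpa [Prod.ext_iff] using heq
        subst hm; subst hn
        exact ⟨by omega, by push_cast; omega, (odd_choose_oo m' n').mpr h3⟩
  have hdisj : Disjoint ((fun p : ℕ × ℕ => (2 * p.1 + 1, 2 * p.2)) '' psiSet q)
      ((fun p : ℕ × ℕ => (2 * p.1 + 1, 2 * p.2 + 1)) '' psiSet (q - 1)) := by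
    rw [Set.disjoint_left]
    rintro ⟨m, n⟩ ⟨⟨a, b⟩, _, heq1⟩ ⟨⟨c, d⟩, _, heq2⟩
    simp only [Prod.ext_iff] at heq1 heq2
    omega
  have hinj1 : Function.Injective (fun p : ℕ × ℕ => (2 * p.1 + 1, 2 * p.2)) := by
    rintro ⟨a, b⟩ ⟨c, d⟩ h
    simp only [Prod.ext_iff] at h ⊢
    omega
  have hinj2 : Function.Injective (fun p : ℕ × ℕ => (2 * p.1 + 1, 2 * p.2 + 1)) := by
    rintro ⟨a, b⟩ ⟨c, d⟩ h
    simp only [Prod.ext_iff] at h ⊢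
    omega
  rw [psi_eq_ncard, psi_eq_ncard, psi_eq_ncard, himg,
    Set.ncard_union_eq hdisj ((psiSet_finite q).image _) ((psiSet_finite (q - 1)).image _),
    Set.ncard_image_of_injective _ hinj1, Set.ncard_image_of_injective _ hinj2]

lemma Mfun_succ (u : ℕ) : Mfun (u + 1) = Mfun u + psi (u : ℤ) :=
  Finset.sum_range_succ _ u

lemma Mfun_two_mul (u : ℕ) : Mfun (2 * u) + psi ((u : ℤ) - 1) = 3 * Mfun u := by
  induction u with
  | zero => simp [Mfun, psi_neg (by norm_num : (-1 : ℤ) < 0)]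
  | succ u ih =>
    have h1 : 2 * (u + 1) = (2 * u + 1) + 1 := by ring
    rw [h1, Mfun_succ, Mfun_succ, Mfun_succ]
    have h2 : ((2 * u : ℕ) : ℤ) = 2 * (u : ℤ) := by push_cast; ring
    have h3 : ((2 * u + 1 : ℕ) : ℤ) = 2 * (u : ℤ) + 1 := by push_cast; ring
    rw [h2, h3, psi_even, psi_odd]
    have h4 : ((u + 1 : ℕ) : ℤ) - 1 = (u : ℤ) := by push_cast; ring
    rw [h4]
    omega

lemma rpow_two_theta2 : (2 : ℝ) ^ theta2 = 3 := by
  rw [theta2, Real.rpow_def_of_pos (by norm_num : (0 : ℝ) < 2)]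
  rw [mul_div_assoc', mul_comm, mul_div_assoc, div_self (by positivity : Real.log 2 ≠ 0), mul_one,
    Real.exp_log (by norm_num : (0 : ℝ) < 3)]

lemma rpow_pow_theta2 (k : ℕ) : ((2 : ℝ) ^ k) ^ theta2 = 3 ^ k := by
  rw [← Real.rpow_natCast 2 k, ← Real.rpow_mul (by norm_num : (0 : ℝ) ≤ 2), mul_comm,
    Real.rpow_mul (by norm_num : (0 : ℝ) ≤ 2), Real.rpow_natCast, rpow_two_theta2]

lemma dfun_two_mul {v : ℕ} (hv : 0 < v) :
    dfun (2 * v) = dfun v - (psi ((v : ℤ) - 1) : ℝ) / (3 * (v : ℝ) ^ theta2) := by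
  have hvθ : (0 : ℝ) < (v : ℝ) ^ theta2 :=
    Real.rpow_pos_of_pos (by exact_mod_cast hv) _
  have hM : (Mfun (2 * v) : ℝ) = 3 * (Mfun v : ℝ) - (psi ((v : ℤ) - 1) : ℝ) := by
    have h := Mfun_two_mul v
    have h' : (Mfun (2 * v) : ℝ) + (psi ((v : ℤ) - 1) : ℝ) = 3 * (Mfun v : ℝ) := by
      exact_mod_cast h
    linarith
  have hpow : ((2 * v : ℕ) : ℝ) ^ theta2 = 3 * (v : ℝ) ^ theta2 := by
    have : ((2 * v : ℕ) : ℝ) = 2 * (v : ℝ) := by push_cast; ring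
    rw [this, Real.mul_rpow (by norm_num) (by positivity), rpow_two_theta2]
  rw [dfun, dfun, hM, hpow]
  field_simp

theorem dfun_tendsto (u : ℕ) (hu : 0 < u) :
    Tendsto (fun k : ℕ => dfun (2 ^ k * u)) atTop
      (nhds (dfun u -
        (3 * (psi ((u : ℤ) - 1) : ℝ) + (psi ((u : ℤ) - 2) : ℝ)) / (5 * (u : ℝ) ^ theta2))) := by
  have huR : (0 : ℝ) < (u : ℝ) := by exact_mod_cast hu
  have huθ : (0 : ℝ) < (u : ℝ) ^ theta2 := Real.rpow_pos_of_pos huR _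
  set A : ℕ → ℝ := fun k => (psi ((2 : ℤ) ^ k * u - 1) : ℝ) with hA
  set B : ℕ → ℝ := fun k => (psi ((2 : ℤ) ^ k * u - 2) : ℝ) with hB
  have hArec : ∀ k, A (k + 1) = A k + B k := by
    intro k
    have harg : (2 : ℤ) ^ (k + 1) * u - 1 = 2 * ((2 : ℤ) ^ k * u - 1) + 1 := by ring
    have harg2 : (2 : ℤ) ^ k * u - 1 - 1 = (2 : ℤ) ^ k * u - 2 := by ring
    simp only [hA, hB, harg, psi_odd, harg2]
    push_cast
    ring
  have hBrec : ∀ k, B (k + 1) = A k := by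
    intro k
    have harg : (2 : ℤ) ^ (k + 1) * u - 2 = 2 * ((2 : ℤ) ^ k * u - 1) := by ring
    simp only [hA, hB, harg, psi_even]
  have hApos : ∀ k, 0 ≤ A k := fun k => Nat.cast_nonneg _
  have hBpos : ∀ k, 0 ≤ B k := fun k => Nat.cast_nonneg _
  -- growth bound
  have hbound : ∀ k, A k + B k ≤ (A 0 + B 0) * 2 ^ k := by
    intro k
    induction k with
    | zero => simp
    | succ k ih =>
      rw [hArec k, hBrec k, pow_succ]
      nlinarith [hApos k, hBpos k]
  -- the partial-sum identity
  set x : ℕ → ℝ := fun k => ∑ j ∈ Finset.range k, A j / 3 ^ (j + 1) with hx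
  set L : ℝ := (3 * A 0 + B 0) / 5 with hL
  have hxe : ∀ k, L - x k = (3 * A k + B k) / (5 * 3 ^ k) := by
    intro k
    induction k with
    | zero => simp [hx, hL]
    | succ k ih =>
      have hxs : x (k + 1) = x k + A k / 3 ^ (k + 1) := Finset.sum_range_succ _ k
      have h3 : (3 : ℝ) ^ k ≠ 0 := by positivity
      rw [hxs, hArec k, hBrec k]
      have : L - (x k + A k / 3 ^ (k + 1)) = (L - x k) - A k / 3 ^ (k + 1) := by ring
      rw [this, ih]
      field_simp
      ring
  -- the formula for dfun (2^k u)
  have hform : ∀ k, dfun (2 ^ k * u) = dfun u - x k / (u : ℝ) ^ theta2 := by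
    intro k
    induction k with
    | zero => simp [hx]
    | succ k ih =>
      have h1 : 2 ^ (k + 1) * u = 2 * (2 ^ k * u) := by ring
      have hv : 0 < 2 ^ k * u := by positivity
      rw [h1, dfun_two_mul hv, ih]
      have hcast : ((2 ^ k * u : ℕ) : ℤ) - 1 = (2 : ℤ) ^ k * u - 1 := by push_cast; ring
      have hpow : ((2 ^ k * u : ℕ) : ℝ) ^ theta2 = 3 ^ k * (u : ℝ) ^ theta2 := by
        have : ((2 ^ k * u : ℕ) : ℝ) = 2 ^ k * (u : ℝ) := by push_cast; ring
        rw [this, Real.mul_rpow (by positivity) (by positivity), rpow_pow_theta2]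
      rw [hcast, hpow]
      have hxs : x (k + 1) = x k + A k / 3 ^ (k + 1) := Finset.sum_range_succ _ k
      have hAk : (psi ((2 : ℤ) ^ k * u - 1) : ℝ) = A k := rfl
      rw [hxs, hAk]
      have h3 : (3 : ℝ) ^ k ≠ 0 := by positivity
      field_simp
      ring
  -- limit of x
  have hxlim : Tendsto x atTop (nhds L) := by
    have he0 : Tendsto (fun k : ℕ => L - x k) atTop (nhds 0) := by
      apply squeeze_zero (g := fun k : ℕ => (3 * (A 0 + B 0)) / 5 * (2 / 3) ^ k)
      · intro k
        rw [hxe k]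
        positivity
      · intro k
        rw [hxe k]
        have h1 : (3 : ℝ) * A k + B k ≤ 3 * (A 0 + B 0) * 2 ^ k := by
          have := hbound k
          nlinarith [hBpos k]
        rw [div_le_iff₀ (by positivity : (0 : ℝ) < 5 * 3 ^ k)]
        have h2 : (3 * (A 0 + B 0)) / 5 * (2 / 3 : ℝ) ^ k * (5 * 3 ^ k)
            = 3 * (A 0 + B 0) * 2 ^ k := by
          rw [div_pow]
          have h3 : (3 : ℝ) ^ k ≠ 0 := by positivity
          field_simp
        rw [h2]
        exact h1
      · have h23 : |(2 / 3 : ℝ)| < 1 := by rw [abs_of_pos (by norm_num)]; norm_num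
        simpa using (tendsto_pow_atTop_nhds_zero_of_lt_one (by norm_num : (0:ℝ) ≤ 2/3)
          (by norm_num : (2/3 : ℝ) < 1)).const_mul ((3 * (A 0 + B 0)) / 5)
    have := (tendsto_const_nhds (x := L) (f := atTop)).sub he0
    simpa using this
  -- conclude
  have hA0 : A 0 = (psi ((u : ℤ) - 1) : ℝ) := by simp [hA]
  have hB0 : B 0 = (psi ((u : ℤ) - 2) : ℝ) := by simp [hB]
  have hfinal : dfun u - L / (u : ℝ) ^ theta2 =
      dfun u - (3 * (psi ((u : ℤ) - 1) : ℝ) + (psi ((u : ℤ) - 2) : ℝ)) /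
        (5 * (u : ℝ) ^ theta2) := by
    rw [hL, hA0, hB0, div_div]
  rw [← hfinal]
  have : (fun k : ℕ => dfun (2 ^ k * u)) = fun k => dfun u - x k / (u : ℝ) ^ theta2 :=
    funext hform
  rw [this]
  exact (tendsto_const_nhds).sub (hxlim.div_const _)
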